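/- The Hessian in θ of Φ(p,θ) = D_JS(p, p(θ)) satisfies the matrix identity H_Φ(p,θ) = H_{p₁,…,p_k}(θ) + (1/2) I(θ) − (1/2) A(p,θ)ᵀ A(p,θ), where H_{p₁,…,p_k}(θ) has entries Σ_i φ'(p_i(θ)/p_i) ∂²p_i/∂θ_l∂θ_j, I(θ) is the Fisher information, A(p,θ) = Λ(p,θ)J(θ) with Λ(p,θ) = diag(1/√(p_i + p_i(θ))). -/

import Mathlib

open Real Finset

/-- The generating convex function of JSD as a φ-divergence. -/
noncomputable def phiJS (u : ℝ) : ℝ :=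
  (1/2) * u * Real.log u - (1/2) * (u + 1) * Real.log ((u + 1) / 2)

/-- φ'(u) = (1/2) ln(u/((u+1)/2)). -/
noncomputable def phiJS' (u : ℝ) : ℝ :=
  (1/2) * Real.log (u / ((u + 1) / 2))

lemma phiJS_symm {x c : ℝ} (hx : 0 < x) (hc : 0 < c) :
    x * phiJS (c / x) = c * phiJS (x / c) := by
  unfold phiJS
  have h1 : (c / x + 1) / 2 = (c + x) / (2 * x) := by field_simp
  have h2 : (x / c + 1) / 2 = (x + c) / (2 * c) := by field_simp
  rw [h1, h2, Real.log_div hc.ne' hx.ne', Real.log_div hx.ne' hc.ne',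
    Real.log_div (by positivity) (by positivity),
    Real.log_div (by positivity) (by positivity),
    Real.log_mul (by norm_num) hx.ne', Real.log_mul (by norm_num) hc.ne']
  have hxc : x + c = c + x := by ring
  rw [hxc]
  field_simp
  ring

lemma hasDerivAt_phiJS {u : ℝ} (hu : 0 < u) :
    HasDerivAt phiJS ((1/2) * Real.log u - (1/2) * Real.log ((u + 1) / 2)) u := by
  have h1 : HasDerivAt (fun y : ℝ => (1/2) * y * Real.log y)
      ((1/2) * (1 * Real.log u + u * u⁻¹)) u := by
    have := ((hasDerivAt_id u).mul (Real.hasDerivAt_log hu.ne')).const_mul (1/2 : ℝ)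
    simp only [id_eq] at this
    convert this using 2
    · rfl
    · rfl
    · simp only [Pi.mul_apply, id_eq]; ring
  have hpos : (0:ℝ) < (u + 1) / 2 := by positivity
  have hlog : HasDerivAt (fun y : ℝ => Real.log ((y + 1) / 2)) (((u + 1) / 2)⁻¹ * (1/2)) u := by
    have hinner : HasDerivAt (fun y : ℝ => (y + 1) / 2) (1/2) u := by
      simpa using ((hasDerivAt_id u).add_const 1).div_const 2
    exact (Real.hasDerivAt_log hpos.ne').comp u hinner
  have h2 : HasDerivAt (fun y : ℝ => (1/2) * (y + 1) * Real.log ((y + 1) / 2))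
      ((1/2) * (1 * Real.log ((u + 1) / 2) + (u + 1) * (((u + 1) / 2)⁻¹ * (1/2)))) u := by
    have := (((hasDerivAt_id u).add_const 1).mul hlog).const_mul (1/2 : ℝ)
    simp only [id_eq] at this
    convert this using 2
    · rfl
    · rfl
    · simp only [Pi.mul_apply, id_eq]; ring
  have h := h1.sub h2
  refine h.congr_deriv (Eq.symm ?_)
  have hu1 : u + 1 ≠ 0 := by positivity
  field_simp <;> ring

lemma hasDerivAt_B {c x : ℝ} (hc : 0 < c) (hx : 0 < x) :
    HasDerivAt (fun y => c * phiJS (y / c)) (phiJS' (x / c)) x := by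
  have hu : 0 < x / c := div_pos hx hc
  have hinner : HasDerivAt (fun y : ℝ => y / c) (1 / c) x := by
    simpa using (hasDerivAt_id x).div_const c
  have h := ((hasDerivAt_phiJS hu).comp x hinner).const_mul c
  refine h.congr_deriv (Eq.symm ?_)
  unfold phiJS'
  rw [Real.log_div hu.ne' (by positivity)]
  field_simp <;> ring

lemma hasDerivAt_C {c x : ℝ} (hc : 0 < c) (hx : 0 < x) :
    HasDerivAt (fun y => phiJS' (y / c)) (1 / (2 * x) - 1 / (2 * (c + x))) x := by
  have hcx : (0:ℝ) < c + x := by positivity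
  have hg : HasDerivAt (fun y : ℝ => (1/2) * (Real.log 2 + Real.log y - Real.log (c + y)))
      ((1/2) * (0 + x⁻¹ - (c + x)⁻¹)) x := by
    have hlog2 : HasDerivAt (fun _ : ℝ => Real.log 2) 0 x := hasDerivAt_const x _
    have hlogy : HasDerivAt (fun y : ℝ => Real.log y) x⁻¹ x := Real.hasDerivAt_log hx.ne'
    have hlogc : HasDerivAt (fun y : ℝ => Real.log (c + y)) ((c + x)⁻¹) x := by
      have h := (Real.hasDerivAt_log hcx.ne').comp x ((hasDerivAt_id x).const_add c)
      exact h.congr_deriv (mul_one _)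
    exact ((hlog2.add hlogy).sub hlogc).const_mul (1/2 : ℝ)
  have heq : (fun y => phiJS' (y / c)) =ᶠ[nhds x]
      (fun y : ℝ => (1/2) * (Real.log 2 + Real.log y - Real.log (c + y))) := by
    filter_upwards [Ioi_mem_nhds hx] with y hy
    have hy0 : (0:ℝ) < y := hy
    have hcy : (0:ℝ) < c + y := by positivity
    unfold phiJS'
    have harg : (y / c) / ((y / c + 1) / 2) = 2 * y / (c + y) := by
      field_simp; ring
    rw [harg, Real.log_div (by positivity) hcy.ne',
      Real.log_mul (by norm_num) hy0.ne']
  have h := hg.congr_of_eventuallyEq heq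
  refine h.congr_deriv (Eq.symm ?_)
  field_simp
  ring


/-- Hessian identity for Φ(p,θ) = Σ_i p_i(θ) φ(p_i/p_i(θ)):
H_Φ(p,θ)_{lj} = Σ_i φ'(p_i(θ)/p_i) ∂²_{lj} p_i(θ) + (1/2) I_{lj}(θ) − (1/2)[A(p,θ)ᵀA(p,θ)]_{lj}. -/
theorem jsDiv_hessian_identity {d k : ℕ}
    (p : Fin k → ℝ) (hp : ∀ i, 0 < p i) (hpsum : ∑ i, p i = 1)
    (pθ : (Fin d → ℝ) → Fin k → ℝ) (θ0 : Fin d → ℝ)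
    (hsmooth : ∀ i, ContDiff ℝ 2 (fun t => pθ t i))
    (hpos : ∀ t i, 0 < pθ t i) (hθsum : ∀ t, ∑ i, pθ t i = 1)
    (l j : Fin d) :
    fderiv ℝ
        (fun t => fderiv ℝ (fun t' => ∑ i, pθ t' i * phiJS (p i / pθ t' i)) t
          (Pi.single j 1)) θ0 (Pi.single l 1) =
      (∑ i, phiJS' (pθ θ0 i / p i) *
          fderiv ℝ (fun t => fderiv ℝ (fun t' => pθ t' i) t (Pi.single j 1)) θ0
            (Pi.single l 1))
        + (1/2) * (∑ i, fderiv ℝ (fun t => pθ t i) θ0 (Pi.single l 1) *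
              fderiv ℝ (fun t => pθ t i) θ0 (Pi.single j 1) / pθ θ0 i)
        - (1/2) * (∑ i, fderiv ℝ (fun t => pθ t i) θ0 (Pi.single l 1) *
              fderiv ℝ (fun t => pθ t i) θ0 (Pi.single j 1) / (p i + pθ θ0 i)) := by
  have hdiff : ∀ i, ∀ t : Fin d → ℝ, DifferentiableAt ℝ (fun t => pθ t i) t := fun i t =>
    ((hsmooth i).differentiable (by norm_num)).differentiableAt
  -- Step 1: symmetrize the summand
  have hfun : (fun t' => ∑ i, pθ t' i * phiJS (p i / pθ t' i))
      = fun t' => ∑ i, p i * phiJS (pθ t' i / p i) := by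
    funext t'
    exact Finset.sum_congr rfl fun i _ => phiJS_symm (hpos t' i) (hp i)
  rw [hfun]
  -- Step 2: first derivative
  have hD1 : ∀ t : Fin d → ℝ, HasFDerivAt (fun t' => ∑ i, p i * phiJS (pθ t' i / p i))
      (∑ i, phiJS' (pθ t i / p i) • fderiv ℝ (fun t' => pθ t' i) t) t := by
    intro t
    apply HasFDerivAt.fun_sum
    intro i _
    exact ((hasDerivAt_B (hp i) (hpos t i)).comp_hasFDerivAt t (hdiff i t).hasFDerivAt :)
  have hfun2 : (fun t => fderiv ℝ (fun t' => ∑ i, p i * phiJS (pθ t' i / p i)) t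
        (Pi.single j 1))
      = fun t => ∑ i, phiJS' (pθ t i / p i) *
          fderiv ℝ (fun t' => pθ t' i) t (Pi.single j 1) := by
    funext t
    rw [(hD1 t).fderiv]
    simp
  rw [hfun2]
  -- Step 3: second derivative
  have hC1 : ∀ i, ContDiff ℝ 1 fun t => fderiv ℝ (fun t' => pθ t' i) t := fun i =>
    (hsmooth i).fderiv_right (by norm_num)
  have hDjdiff : ∀ i, HasFDerivAt
      (fun t => fderiv ℝ (fun t' => pθ t' i) t (Pi.single j 1))
      (fderiv ℝ (fun t => fderiv ℝ (fun t' => pθ t' i) t (Pi.single j 1)) θ0) θ0 :=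
    fun i => (((hC1 i).clm_apply contDiff_const).differentiable
      one_ne_zero).differentiableAt.hasFDerivAt
  have hprod : HasFDerivAt
      (fun t => ∑ i, phiJS' (pθ t i / p i) *
        fderiv ℝ (fun t' => pθ t' i) t (Pi.single j 1))
      (∑ i, (phiJS' (pθ θ0 i / p i) •
          fderiv ℝ (fun t => fderiv ℝ (fun t' => pθ t' i) t (Pi.single j 1)) θ0
        + (fderiv ℝ (fun t' => pθ t' i) θ0 (Pi.single j 1)) •
          ((1 / (2 * pθ θ0 i) - 1 / (2 * (p i + pθ θ0 i))) •
            fderiv ℝ (fun t' => pθ t' i) θ0))) θ0 := by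
    apply HasFDerivAt.fun_sum
    intro i _
    exact (((hasDerivAt_C (hp i) (hpos θ0 i)).comp_hasFDerivAt θ0
      (hdiff i θ0).hasFDerivAt).mul (hDjdiff i) :)
  rw [hprod.fderiv]
  simp only [ContinuousLinearMap.sum_apply, ContinuousLinearMap.add_apply,
    ContinuousLinearMap.coe_smul', Pi.smul_apply, smul_eq_mul]
  rw [Finset.sum_add_distrib]
  have hb : (∑ i, fderiv ℝ (fun t' => pθ t' i) θ0 (Pi.single j 1) *
        ((1 / (2 * pθ θ0 i) - 1 / (2 * (p i + pθ θ0 i))) *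
          fderiv ℝ (fun t' => pθ t' i) θ0 (Pi.single l 1)))
      = 1/2 * (∑ i, fderiv ℝ (fun t => pθ t i) θ0 (Pi.single l 1) *
            fderiv ℝ (fun t => pθ t i) θ0 (Pi.single j 1) / pθ θ0 i)
        - 1/2 * (∑ i, fderiv ℝ (fun t => pθ t i) θ0 (Pi.single l 1) *
            fderiv ℝ (fun t => pθ t i) θ0 (Pi.single j 1) / (p i + pθ θ0 i)) := by
    rw [Finset.mul_sum, Finset.mul_sum, ← Finset.sum_sub_distrib]
    refine Finset.sum_congr rfl fun i _ => ?_
    have h1 : pθ θ0 i ≠ 0 := (hpos θ0 i).ne'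
    have h2 : p i + pθ θ0 i ≠ 0 := ne_of_gt (add_pos (hp i) (hpos θ0 i))
    field_simp <;> ring
  rw [hb]
  ring
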